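/- For self-adjoint operators A₁, A₂ on ℂ^d, k ∈ [d], and ℓ₁, ℓ₂ ∈ [d], the alignment term α^{(k)}_{(ℓ₁,ℓ₂)} := s_k(P_{↓ℓ₁}(A₁) + P_{↓ℓ₂}(A₂)) satisfies the lower bound α^{(k)}_{(ℓ₁,ℓ₂)} ≥ min(k, max(0, ℓ₁ + ℓ₂ − d)) + min(k, ℓ₁ + ℓ₂). In particular, if ℓ₁ + ℓ₂ ≤ k then α^{(k)}_{(ℓ₁,ℓ₂)} = ℓ₁ + ℓ₂. -/

import Mathlib

open Matrix

/-- Sum of the `k` largest values of `f` (as the sup of sums over `k`-subsets). -/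
noncomputable def sk {ι : Type*} [Fintype ι] (f : ι → ℝ) (k : ℕ) : ℝ :=
  sSup {x | ∃ S : Finset ι, S.card = k ∧ x = ∑ i ∈ S, f i}

/-- Projector onto the span of the first `ℓ` of the vectors `v i`. -/
noncomputable def proj {d : ℕ} (v : Fin d → Fin d → ℂ) (ℓ : ℕ) : Matrix (Fin d) (Fin d) ℂ :=
  ∑ i ∈ Finset.univ.filter (fun i : Fin d => (i : ℕ) < ℓ),
    Matrix.vecMulVec (v i) (star (v i))

open Finset


/-- there is a `j`-subset consisting of the largest values -/
lemma exists_top_subset {ι : Type*} [DecidableEq ι] (f : ι → ℝ) (s : Finset ι) :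
    ∀ j : ℕ, j ≤ s.card → ∃ S ⊆ s, S.card = j ∧ ∀ x ∈ S, ∀ y ∈ s, y ∉ S → f y ≤ f x := by
  intro j
  induction j with
  | zero => intro _; exact ⟨∅, empty_subset _, rfl, by simp⟩
  | succ j ih =>
    intro hj
    obtain ⟨S, hSs, hScard, hStop⟩ := ih (Nat.le_of_succ_le hj)
    have hne : (s \ S).Nonempty := by
      rw [← Finset.card_pos, Finset.card_sdiff_of_subset hSs]
      omega
    obtain ⟨m, hm, hmax⟩ := Finset.exists_max_image (s \ S) f hne
    have hmS : m ∉ S := (Finset.mem_sdiff.mp hm).2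
    refine ⟨insert m S, ?_, ?_, ?_⟩
    · exact Finset.insert_subset (Finset.mem_sdiff.mp hm).1 hSs
    · rw [Finset.card_insert_of_notMem hmS, hScard]
    · intro x hx y hy hyn
      rcases Finset.mem_insert.mp hx with rfl | hxS
      · exact hmax y (Finset.mem_sdiff.mpr ⟨hy, fun h => hyn (Finset.mem_insert_of_mem h)⟩)
      · exact hStop x hxS y hy (fun h => hyn (Finset.mem_insert_of_mem h))

lemma top_subset_sum {ι : Type*} [DecidableEq ι] (f : ι → ℝ) (s S : Finset ι) (hSs : S ⊆ s)
    (htop : ∀ x ∈ S, ∀ y ∈ s, y ∉ S → f y ≤ f x) :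
    (S.card : ℝ) * ∑ i ∈ s, f i ≤ (s.card : ℝ) * ∑ i ∈ S, f i := by
  have key : (0:ℝ) ≤ ∑ x ∈ S, ∑ y ∈ s \ S, (f x - f y) := by
    apply Finset.sum_nonneg; intro x hx
    apply Finset.sum_nonneg; intro y hy
    have := htop x hx y (Finset.mem_sdiff.mp hy).1 (Finset.mem_sdiff.mp hy).2
    linarith
  have hexp : ∑ x ∈ S, ∑ y ∈ s \ S, (f x - f y)
      = ((s \ S).card : ℝ) * ∑ x ∈ S, f x - (S.card : ℝ) * ∑ y ∈ s \ S, f y := by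
    simp only [Finset.sum_sub_distrib, Finset.sum_const, nsmul_eq_mul]

    rw [Finset.mul_sum, Finset.mul_sum]
  have hsd : ∑ y ∈ s \ S, f y = ∑ i ∈ s, f i - ∑ i ∈ S, f i := by
    rw [Finset.sum_sdiff_eq_sub hSs]
  have hcard : ((s \ S).card : ℝ) = (s.card : ℝ) - S.card := by
    rw [Finset.card_sdiff_of_subset hSs]
    have := Finset.card_le_card hSs
    push_cast [Nat.cast_sub this]
    ring
  rw [hexp, hsd, hcard] at key
  nlinarith [key]

lemma endgame {d : ℕ} (f : Fin d → ℝ) (k t : ℕ) (hk1 : 1 ≤ k) (hk : k ≤ d)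
    (h0 : ∀ i, 0 ≤ f i)
    (hsum : ∑ i, f i = (t : ℝ))
    (htd : t ≤ d + (Finset.univ.filter fun i => f i = 2).card)
    (hpair : ∑ i, f i = ((Finset.univ.filter fun i => f i ≠ 0).card : ℝ)
        + ((Finset.univ.filter fun i => f i = 2).card : ℝ)) :
    ((min k (t - d) : ℕ) : ℝ) + ((min k t : ℕ) : ℝ) ≤ sk f k
      ∧ (t ≤ k → sk f k = (t : ℝ)) := by
  classical
  set A := Finset.univ.filter (fun i => f i = 2) with hAdef
  set R := Finset.univ.filter (fun i => f i ≠ 0) with hRdef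
  set a := A.card
  set r := R.card
  have hfA : ∀ i ∈ A, f i = 2 := fun i hi => (Finset.mem_filter.mp hi).2
  have hfR : ∀ i, i ∉ R → f i = 0 := by
    intro i hi
    by_contra h
    exact hi (Finset.mem_filter.mpr ⟨Finset.mem_univ i, h⟩)
  have hAR : A ⊆ R := by
    intro i hi
    exact Finset.mem_filter.mpr ⟨Finset.mem_univ i, by rw [hfA i hi]; norm_num⟩
  have htn : t = r + a := by
    have : (t : ℝ) = (r : ℝ) + a := by rw [← hsum, hpair]
    exact_mod_cast this
  have hsumR : ∑ i ∈ R, f i = (t : ℝ) := by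
    rw [← hsum]
    exact Finset.sum_subset (Finset.subset_univ R) (fun x _ hx => hfR x hx)
  have hsumA : ∑ i ∈ A, f i = 2 * (a : ℝ) := by
    rw [Finset.sum_congr rfl hfA, Finset.sum_const]
    push_cast; ring
  have hcardu : (Finset.univ : Finset (Fin d)).card = d := by simp
  set SS := {x : ℝ | ∃ S : Finset (Fin d), S.card = k ∧ x = ∑ i ∈ S, f i} with hSSdef
  have hub : ∀ x ∈ SS, x ≤ (t : ℝ) := by
    rintro x ⟨S, hc, rfl⟩
    calc ∑ i ∈ S, f i ≤ ∑ i, f i := by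
          apply Finset.sum_le_sum_of_subset_of_nonneg (Finset.subset_univ S)
          intro i _ _; exact h0 i
      _ = (t : ℝ) := hsum
  have hbdd : BddAbove SS := ⟨t, hub⟩
  have hsk : sk f k = sSup SS := rfl
  have hle : ∀ T : Finset (Fin d), T.card = k → ∑ i ∈ T, f i ≤ sk f k := by
    intro T hT
    rw [hsk]
    exact le_csSup hbdd ⟨T, hT, rfl⟩
  -- key: if r ≤ k then t ≤ sk
  have key3 : r ≤ k → (t : ℝ) ≤ sk f k := by
    intro hrk
    obtain ⟨E, hE, hEcard⟩ := Finset.exists_subset_card_eq (n := k - r)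
      (s := Finset.univ \ R) (by rw [Finset.card_sdiff_of_subset (Finset.subset_univ R), hcardu]; omega)
    have hdisj : Disjoint R E := by
      refine Finset.disjoint_left.mpr fun x hx hxE => ?_
      exact (Finset.mem_sdiff.mp (hE hxE)).2 hx
    have hcard : (R ∪ E).card = k := by
      rw [Finset.card_union_of_disjoint hdisj, hEcard]; omega
    have hsumT : ∑ i ∈ R ∪ E, f i = (t : ℝ) := by
      rw [Finset.sum_union hdisj, hsumR]
      have : ∑ i ∈ E, f i = 0 := by
        apply Finset.sum_eq_zero
        intro i hi
        exact hfR i (Finset.mem_sdiff.mp (hE hi)).2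
      rw [this, add_zero]
    calc (t:ℝ) = ∑ i ∈ R ∪ E, f i := hsumT.symm
      _ ≤ sk f k := hle _ hcard
  constructor
  · -- lower bound
    rcases le_or_gt k a with hka | hak
    · obtain ⟨T, hTA, hTcard⟩ := Finset.exists_subset_card_eq (n := k) (s := A) hka
      have hsumT : ∑ i ∈ T, f i = 2 * (k : ℝ) := by
        rw [Finset.sum_congr rfl (fun i hi => hfA i (hTA hi)), Finset.sum_const, hTcard]
        push_cast; ring
      have hb : (min k (t - d) + min k t : ℕ) ≤ 2 * k := by omega
      calc ((min k (t-d) : ℕ):ℝ) + ((min k t : ℕ):ℝ) ≤ 2*(k:ℝ) := by exact_mod_cast hb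
        _ = ∑ i ∈ T, f i := hsumT.symm
        _ ≤ sk f k := hle _ hTcard
    · rcases le_or_gt k r with hkr | hrk
      · -- a < k ≤ r
        have hRA : (R \ A).card = r - a := by
          rw [Finset.card_sdiff_of_subset hAR]
        obtain ⟨S, hSsub, hScard, hStop⟩ := exists_top_subset f (R \ A) (k - a) (by omega)
        have havg := top_subset_sum f (R \ A) S hSsub hStop
        have hsumRA : ∑ i ∈ R \ A, f i = (r : ℝ) - a := by
          rw [Finset.sum_sdiff_eq_sub hAR, hsumR, hsumA]
          have : (t : ℝ) = (r : ℝ) + a := by exact_mod_cast htn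
          rw [this]; ring
        rw [hsumRA, hScard, hRA] at havg
        have hra : a < r := by omega
        have hSsum : (k : ℝ) - a ≤ ∑ i ∈ S, f i := by
          have h1 : ((k - a : ℕ) : ℝ) * ((r:ℝ) - a) ≤ ((r - a : ℕ):ℝ) * ∑ i ∈ S, f i := havg
          have h2 : ((k - a : ℕ) : ℝ) = (k:ℝ) - a := by
            push_cast [Nat.cast_sub (le_of_lt hak)]; ring
          have h3 : ((r - a : ℕ) : ℝ) = (r:ℝ) - a := by
            push_cast [Nat.cast_sub (le_of_lt hra)]; ring
          rw [h2, h3] at h1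
          have hpos : (0:ℝ) < (r:ℝ) - a := by
            have : (a:ℝ) < r := by exact_mod_cast hra
            linarith
          nlinarith [h1, hpos]
        have hdisj : Disjoint A S := by
          refine Finset.disjoint_left.mpr fun x hx hxS => ?_
          exact (Finset.mem_sdiff.mp (hSsub hxS)).2 hx
        have hcard : (A ∪ S).card = k := by
          rw [Finset.card_union_of_disjoint hdisj, hScard]; omega
        have hsumT : 2*(a:ℝ) + ((k:ℝ) - a) ≤ ∑ i ∈ A ∪ S, f i := by
          rw [Finset.sum_union hdisj, hsumA]
          linarith [hSsum]
        have hb : (min k (t - d) + min k t : ℕ) ≤ k + a := by omega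
        calc ((min k (t-d) : ℕ):ℝ) + ((min k t : ℕ):ℝ) ≤ (k:ℝ) + a := by exact_mod_cast hb
          _ = 2*(a:ℝ) + ((k:ℝ) - a) := by ring
          _ ≤ ∑ i ∈ A ∪ S, f i := hsumT
          _ ≤ sk f k := hle _ hcard
      · -- r < k
        have hb : (min k (t - d) + min k t : ℕ) ≤ t := by omega
        calc ((min k (t-d) : ℕ):ℝ) + ((min k t : ℕ):ℝ) ≤ (t:ℝ) := by exact_mod_cast hb
          _ ≤ sk f k := key3 (le_of_lt hrk)
  · -- equality
    intro htk
    have hge := key3 (by omega)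
    have hne : SS.Nonempty := by
      obtain ⟨T, _, hTcard⟩ := Finset.exists_subset_card_eq (n := k)
        (s := (Finset.univ : Finset (Fin d))) (by omega)
      exact ⟨∑ i ∈ T, f i, T, hTcard, rfl⟩
    have hle' : sk f k ≤ (t:ℝ) := csSup_le hne hub
    linarith

section MatrixFacts
variable {d : ℕ}

lemma mul_vecMulVec (a b c e : Fin d → ℂ) :
    vecMulVec a (star b) * vecMulVec c (star e) = (star b ⬝ᵥ c) • vecMulVec a (star e) := by
  ext i j
  simp only [Matrix.mul_apply, vecMulVec_apply, Matrix.smul_apply, dotProduct, Pi.star_apply,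
    smul_eq_mul, Finset.sum_mul]
  apply Finset.sum_congr rfl
  intro x _
  ring

lemma vecMulVec_mulVec' (a b y : Fin d → ℂ) :
    vecMulVec a (star b) *ᵥ y = (star b ⬝ᵥ y) • a := by
  ext i
  simp only [Matrix.mulVec, vecMulVec_apply, dotProduct, Pi.star_apply, Pi.smul_apply,
    smul_eq_mul]
  rw [Finset.sum_mul]
  apply Finset.sum_congr rfl
  intro x _
  ring

/-- completeness of an orthonormal family of `d` vectors -/
lemma sum_vecMulVec_eq_one (v : Fin d → Fin d → ℂ)
    (hv : ∀ i j, star (v i) ⬝ᵥ v j = if i = j then 1 else 0) :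
    ∑ i, vecMulVec (v i) (star (v i)) = (1 : Matrix (Fin d) (Fin d) ℂ) := by
  classical
  set B : Matrix (Fin d) (Fin d) ℂ := Matrix.of v with hB
  have hBBH : B * Bᴴ = 1 := by
    ext i j
    simp only [Matrix.mul_apply, Matrix.conjTranspose_apply, hB, Matrix.of_apply, Matrix.one_apply]
    have := hv j i
    simp only [dotProduct, Pi.star_apply] at this
    rw [show ∑ k, v i k * star (v j k) = ∑ k, star (v j k) * v i k from
      Finset.sum_congr rfl (fun x _ => mul_comm _ _), this]
    by_cases h : i = j <;> simp [h, eq_comm]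
  have hBHB : Bᴴ * B = 1 := mul_eq_one_comm.mp hBBH
  ext i j
  have := congrFun (congrFun hBHB j) i
  simp only [Matrix.mul_apply, Matrix.conjTranspose_apply, hB, Matrix.of_apply,
    Matrix.one_apply] at this ⊢
  simp only [Matrix.sum_apply, vecMulVec_apply, Pi.star_apply]
  rw [show ∑ x, v x i * star (v x j) = ∑ x, star (v x j) * v x i from
    Finset.sum_congr rfl (fun x _ => mul_comm _ _), this]
  by_cases h : i = j <;> simp [h, eq_comm]

end MatrixFacts

section Proj
variable {d : ℕ}

lemma dotProduct_finset_sum {ι : Type*} (x : Fin d → ℂ) (s : Finset ι) (g : ι → Fin d → ℂ) :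
    x ⬝ᵥ (∑ i ∈ s, g i) = ∑ i ∈ s, x ⬝ᵥ g i := by
  simp only [dotProduct, Finset.sum_apply, Finset.mul_sum]
  rw [Finset.sum_comm]

lemma finset_sum_mulVec {ι : Type*} (s : Finset ι) (g : ι → Matrix (Fin d) (Fin d) ℂ)
    (y : Fin d → ℂ) : (∑ i ∈ s, g i) *ᵥ y = ∑ i ∈ s, g i *ᵥ y := by
  ext j
  simp only [Matrix.mulVec, dotProduct, Matrix.sum_apply, Finset.sum_apply, Finset.sum_mul]
  rw [Finset.sum_comm]

/-- partial sum of rank-one projectors -/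
noncomputable def psum (v : Fin d → Fin d → ℂ) (s : Finset (Fin d)) : Matrix (Fin d) (Fin d) ℂ :=
  ∑ i ∈ s, vecMulVec (v i) (star (v i))

lemma proj_eq_psum (v : Fin d → Fin d → ℂ) (ℓ : ℕ) :
    proj v ℓ = psum v (Finset.univ.filter fun i : Fin d => (i : ℕ) < ℓ) := rfl

lemma psum_herm (v : Fin d → Fin d → ℂ) (s : Finset (Fin d)) : (psum v s)ᴴ = psum v s := by
  unfold psum
  rw [Matrix.conjTranspose_sum]
  apply Finset.sum_congr rfl
  intro i _
  ext a b
  simp [Matrix.conjTranspose_apply, vecMulVec_apply, mul_comm]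

lemma psum_idem (v : Fin d → Fin d → ℂ)
    (hv : ∀ i j, star (v i) ⬝ᵥ v j = if i = j then 1 else 0) (s : Finset (Fin d)) :
    psum v s * psum v s = psum v s := by
  unfold psum
  rw [Finset.sum_mul_sum]
  have : ∀ i ∈ s, ∀ j ∈ s, vecMulVec (v i) (star (v i)) * vecMulVec (v j) (star (v j))
      = if i = j then vecMulVec (v i) (star (v j)) else 0 := by
    intro i _ j _
    rw [mul_vecMulVec, hv i j]
    by_cases h : i = j <;> simp [h]
  calc ∑ i ∈ s, ∑ j ∈ s, vecMulVec (v i) (star (v i)) * vecMulVec (v j) (star (v j))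
      = ∑ i ∈ s, ∑ j ∈ s, if i = j then vecMulVec (v i) (star (v j)) else 0 := by
        apply Finset.sum_congr rfl; intro i hi
        apply Finset.sum_congr rfl; intro j hj
        exact this i hi j hj
    _ = ∑ i ∈ s, vecMulVec (v i) (star (v i)) := by
        apply Finset.sum_congr rfl; intro i hi
        rw [Finset.sum_ite_eq s i _, if_pos hi]

lemma psum_mulVec (v : Fin d → Fin d → ℂ) (s : Finset (Fin d)) (y : Fin d → ℂ) :
    psum v s *ᵥ y = ∑ i ∈ s, (star (v i) ⬝ᵥ y) • v i := by
  unfold psum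
  rw [finset_sum_mulVec]
  apply Finset.sum_congr rfl
  intro i _
  exact vecMulVec_mulVec' _ _ _

lemma psum_mulVec_mem_span (v : Fin d → Fin d → ℂ) (s : Finset (Fin d)) (y : Fin d → ℂ) :
    psum v s *ᵥ y ∈ Submodule.span ℂ (v '' s) := by
  rw [psum_mulVec]
  apply Submodule.sum_mem
  intro i hi
  exact Submodule.smul_mem _ _ (Submodule.subset_span ⟨i, hi, rfl⟩)

lemma quad_psum (v : Fin d → Fin d → ℂ) (s : Finset (Fin d)) (y : Fin d → ℂ) :
    star y ⬝ᵥ (psum v s *ᵥ y) = ((∑ i ∈ s, Complex.normSq (star (v i) ⬝ᵥ y) : ℝ) : ℂ) := by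
  rw [psum_mulVec, dotProduct_finset_sum]
  push_cast
  apply Finset.sum_congr rfl
  intro i _
  rw [dotProduct_smul]
  have h1 : star y ⬝ᵥ v i = star (star (v i) ⬝ᵥ y) := by
    rw [Matrix.star_dotProduct]
  rw [h1]
  set z := star (v i) ⬝ᵥ y
  rw [smul_eq_mul, Complex.star_def, Complex.mul_conj]

lemma trace_psum (v : Fin d → Fin d → ℂ)
    (hv : ∀ i j, star (v i) ⬝ᵥ v j = if i = j then 1 else 0) (s : Finset (Fin d)) :
    Matrix.trace (psum v s) = (s.card : ℂ) := by
  unfold psum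
  rw [Matrix.trace_sum]
  have : ∀ i ∈ s, Matrix.trace (vecMulVec (v i) (star (v i))) = 1 := by
    intro i _
    have h1 : star (v i) ⬝ᵥ v i = 1 := by simpa using hv i i
    rw [Matrix.trace]
    simp only [Matrix.diag_apply, vecMulVec_apply, Pi.star_apply]
    rw [← h1]
    simp only [dotProduct, Pi.star_apply]
    exact Finset.sum_congr rfl (fun x _ => mul_comm _ _)
  rw [Finset.sum_congr rfl this, Finset.sum_const, nsmul_eq_mul, mul_one]

lemma card_filter_lt (ℓ : ℕ) (hℓ : ℓ ≤ d) :
    (Finset.univ.filter fun i : Fin d => (i : ℕ) < ℓ).card = ℓ := by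
  have h1 : ((Finset.range d).filter (fun i => i < ℓ)) = Finset.range ℓ := by
    ext i
    simp only [Finset.mem_filter, Finset.mem_range]
    omega
  have h2 : (Finset.univ.filter fun i : Fin d => (i : ℕ) < ℓ).card
      = ((Finset.range d).filter (fun i => i < ℓ)).card := by
    apply Finset.card_bij (fun (i : Fin d) _ => (i : ℕ))
    · intro i hi
      simp only [Finset.mem_filter, Finset.mem_range]
      exact ⟨i.isLt, (Finset.mem_filter.mp hi).2⟩
    · intro i _ j _ h
      exact Fin.val_injective h
    · intro j hj
      simp only [Finset.mem_filter, Finset.mem_range] at hj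
      exact ⟨⟨j, hj.1⟩, Finset.mem_filter.mpr ⟨Finset.mem_univ _, hj.2⟩, rfl⟩
  rw [h2, h1, Finset.card_range]

end Proj

section Count
variable {d : ℕ}
open Module Submodule

lemma li_of_orthonormal_raw (u : Fin d → Fin d → ℂ)
    (h : ∀ i j, star (u i) ⬝ᵥ u j = if i = j then 1 else 0) : LinearIndependent ℂ u := by
  rw [Fintype.linearIndependent_iff]
  intro g hg j
  have := congrArg (fun y => star (u j) ⬝ᵥ y) hg
  rw [dotProduct_finset_sum] at this
  have h2 : ∀ i ∈ Finset.univ, star (u j) ⬝ᵥ (g i • u i) = if j = i then g i else 0 := by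
    intro i _
    rw [dotProduct_smul, h j i]
    by_cases hij : j = i <;> simp [hij]
  rw [Finset.sum_congr rfl h2, Finset.sum_ite_eq Finset.univ j _, if_pos (Finset.mem_univ j)]
    at this
  simpa using this

lemma card_ne_le_finrank (u : Fin d → Fin d → ℂ) (hu : LinearIndependent ℂ u)
    (g : Fin d → ℝ) (W : Submodule ℂ (Fin d → ℂ)) (hmem : ∀ i, g i ≠ 0 → u i ∈ W) :
    (Finset.univ.filter fun i => g i ≠ 0).card ≤ finrank ℂ W := by
  classical
  set T := Finset.univ.filter fun i => g i ≠ 0 with hT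
  have hli : LinearIndependent ℂ (fun i : {x // x ∈ T} => u i) :=
    hu.comp _ Subtype.val_injective
  have hrange : Set.range (fun i : {x // x ∈ T} => u i) = u '' (T : Set (Fin d)) := by
    ext x
    constructor
    · rintro ⟨⟨i, hi⟩, rfl⟩; exact ⟨i, hi, rfl⟩
    · rintro ⟨i, hi, rfl⟩; exact ⟨⟨i, hi⟩, rfl⟩
  have hfr : finrank ℂ (span ℂ (u '' (T : Set (Fin d)))) = T.card := by
    rw [← hrange, finrank_span_eq_card hli, Fintype.card_coe]
  have hle : span ℂ (u '' (T : Set (Fin d))) ≤ W := by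
    rw [span_le]
    rintro x ⟨i, hi, rfl⟩
    have : g i ≠ 0 := by
      have := Finset.mem_coe.mp hi
      rw [hT] at this
      exact (Finset.mem_filter.mp this).2
    exact hmem i this
  rw [← hfr]
  exact Submodule.finrank_mono hle

end Count

lemma proj_alg {R : Type*} [Ring R] (P Q : R) (hP : P*P = P) (hQ : Q*Q = Q) :
    (P+Q)*(P-Q) + (P-Q)*(P+Q) = (P-Q) + (P-Q) ∧
    (P-Q)*(P-Q) = ((P+Q)+(P+Q)) - (P+Q)*(P+Q) := by
  constructor
  · have h : (P+Q)*(P-Q) + (P-Q)*(P+Q) = P*P + P*P - (Q*Q + Q*Q) := by noncomm_ring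
    rw [h, hP, hQ]
    abel
  · have h : (P-Q)*(P-Q) = (P*P + P*P + (Q*Q + Q*Q)) - (P+Q)*(P+Q) := by noncomm_ring
    rw [h, hP, hQ]
    abel

/-- Lower bound on the alignment term (note ℕ-subtraction: `ℓ₁ + ℓ₂ - d = max 0 (ℓ₁+ℓ₂-d)`):
`α^{(k)}_{(ℓ₁,ℓ₂)} = s_k(P_{↓ℓ₁}(A₁) + P_{↓ℓ₂}(A₂)) ≥ min(k, max(0,ℓ₁+ℓ₂−d)) + min(k, ℓ₁+ℓ₂)`, with equality `= ℓ₁+ℓ₂` when `ℓ₁+ℓ₂ ≤ k`. -/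
theorem stmt4 {d : ℕ} (k ℓ₁ ℓ₂ : ℕ)
    (hk1 : 1 ≤ k) (hkd : k ≤ d) (hℓ₁1 : 1 ≤ ℓ₁) (hℓ₁d : ℓ₁ ≤ d) (hℓ₂1 : 1 ≤ ℓ₂) (hℓ₂d : ℓ₂ ≤ d)
    (A₁ A₂ : Matrix (Fin d) (Fin d) ℂ) (hA₁ : A₁.IsHermitian) (hA₂ : A₂.IsHermitian)
    (v w : Fin d → Fin d → ℂ)
    (hv : ∀ i j, star (v i) ⬝ᵥ v j = if i = j then 1 else 0)
    (hw : ∀ i j, star (w i) ⬝ᵥ w j = if i = j then 1 else 0)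
    (μ ν : Fin d → ℝ) (hμ : Antitone μ) (hν : Antitone ν)
    (hveig : ∀ i, A₁ *ᵥ v i = (μ i : ℂ) • v i)
    (hweig : ∀ i, A₂ *ᵥ w i = (ν i : ℂ) • w i)
    (hS : (proj v ℓ₁ + proj w ℓ₂).IsHermitian) :
    (min k (ℓ₁ + ℓ₂ - d) : ℝ) + (min k (ℓ₁ + ℓ₂) : ℝ) ≤ sk hS.eigenvalues k
      ∧ (ℓ₁ + ℓ₂ ≤ k → sk hS.eigenvalues k = (ℓ₁ : ℝ) + ℓ₂) := by
  classical
  set f : Fin d → ℝ := hS.eigenvalues with hf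
  set u : Fin d → Fin d → ℂ := fun i => ⇑(hS.eigenvectorBasis i) with hu
  set M : Matrix (Fin d) (Fin d) ℂ := proj v ℓ₁ + proj w ℓ₂ with hM
  set s₁ : Finset (Fin d) := Finset.univ.filter (fun i : Fin d => (i : ℕ) < ℓ₁) with hs₁
  set s₂ : Finset (Fin d) := Finset.univ.filter (fun i : Fin d => (i : ℕ) < ℓ₂) with hs₂
  set s₁' : Finset (Fin d) := Finset.univ.filter (fun i : Fin d => ¬ ((i : ℕ) < ℓ₁)) with hs₁'
  set s₂' : Finset (Fin d) := Finset.univ.filter (fun i : Fin d => ¬ ((i : ℕ) < ℓ₂)) with hs₂'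
  -- basic facts
  have heig : ∀ i, M *ᵥ u i = ((f i : ℝ) : ℂ) • u i := by
    intro i
    have h := hS.mulVec_eigenvectorBasis i
    rw [hM, hu, hf]
    rw [h]
    ext j
    simp [Complex.real_smul]
  have horth : ∀ i j, star (u i) ⬝ᵥ u j = if i = j then 1 else 0 := by
    intro i j
    have h := orthonormal_iff_ite.mp hS.eigenvectorBasis.orthonormal i j
    rw [EuclideanSpace.inner_eq_star_dotProduct, dotProduct_comm] at h
    exact h
  have hu1 : ∑ i, vecMulVec (u i) (star (u i)) = (1 : Matrix (Fin d) (Fin d) ℂ) :=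
    sum_vecMulVec_eq_one u horth
  have hv1 : psum v s₁ + psum v s₁' = (1 : Matrix (Fin d) (Fin d) ℂ) := by
    rw [← sum_vecMulVec_eq_one v hv, hs₁, hs₁']
    exact Finset.sum_filter_add_sum_filter_not Finset.univ _ _
  have hw1 : psum w s₂ + psum w s₂' = (1 : Matrix (Fin d) (Fin d) ℂ) := by
    rw [← sum_vecMulVec_eq_one w hw, hs₂, hs₂']
    exact Finset.sum_filter_add_sum_filter_not Finset.univ _ _
  have hMpsum : M = psum v s₁ + psum w s₂ := rfl
  have hMleft : ∀ i y, star (u i) ⬝ᵥ (M *ᵥ y) = (f i : ℂ) * (star (u i) ⬝ᵥ y) := by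
    intro i y
    rw [Matrix.dotProduct_mulVec]
    have hsherm : Mᴴ = M := hS
    have h1 : star (u i) ᵥ* M = ((f i : ℂ)) • star (u i) := by
      rw [← hsherm, ← Matrix.star_mulVec, heig i, star_smul]
      simp [Complex.conj_ofReal]
    rw [h1, smul_dotProduct]
    simp
  have hunit : ∀ i, star (u i) ⬝ᵥ u i = 1 := by
    intro i
    rw [horth i i, if_pos rfl]
  -- eigenvalue bounds
  have hquad : ∀ i, f i = (∑ j ∈ s₁, Complex.normSq (star (v j) ⬝ᵥ u i))
      + (∑ j ∈ s₂, Complex.normSq (star (w j) ⬝ᵥ u i)) := by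
    intro i
    have hL : star (u i) ⬝ᵥ (M *ᵥ u i) = (f i : ℂ) := by
      rw [heig i, dotProduct_smul, hunit i]
      simp
    have hR : star (u i) ⬝ᵥ (M *ᵥ u i)
        = ((∑ j ∈ s₁, Complex.normSq (star (v j) ⬝ᵥ u i) : ℝ) : ℂ)
          + ((∑ j ∈ s₂, Complex.normSq (star (w j) ⬝ᵥ u i) : ℝ) : ℂ) := by
      rw [hMpsum, Matrix.add_mulVec, dotProduct_add, quad_psum, quad_psum]
    have := hL.symm.trans hR
    exact_mod_cast this
  have hparseval : ∀ (x : Fin d → Fin d → ℂ)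
      (hx : ∀ i j, star (x i) ⬝ᵥ x j = if i = j then 1 else 0) (i : Fin d),
      ∑ j, Complex.normSq (star (x j) ⬝ᵥ u i) = 1 := by
    intro x hx i
    have h1 : star (u i) ⬝ᵥ (psum x Finset.univ *ᵥ u i)
        = ((∑ j, Complex.normSq (star (x j) ⬝ᵥ u i) : ℝ) : ℂ) := quad_psum x Finset.univ (u i)
    have h2 : psum x Finset.univ = (1 : Matrix (Fin d) (Fin d) ℂ) := sum_vecMulVec_eq_one x hx
    rw [h2, Matrix.one_mulVec, hunit i] at h1
    exact_mod_cast h1.symm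
  have h0 : ∀ i, 0 ≤ f i := by
    intro i
    rw [hquad i]
    have := Finset.sum_nonneg (fun j (_ : j ∈ s₁) => Complex.normSq_nonneg (star (v j) ⬝ᵥ u i))
    have := Finset.sum_nonneg (fun j (_ : j ∈ s₂) => Complex.normSq_nonneg (star (w j) ⬝ᵥ u i))
    linarith
  have h2 : ∀ i, f i ≤ 2 := by
    intro i
    rw [hquad i]
    have hb1 : ∑ j ∈ s₁, Complex.normSq (star (v j) ⬝ᵥ u i) ≤ 1 := by
      rw [← hparseval v hv i]
      apply Finset.sum_le_sum_of_subset_of_nonneg (Finset.subset_univ s₁)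
      intro j _ _
      exact Complex.normSq_nonneg _
    have hb2 : ∑ j ∈ s₂, Complex.normSq (star (w j) ⬝ᵥ u i) ≤ 1 := by
      rw [← hparseval w hw i]
      apply Finset.sum_le_sum_of_subset_of_nonneg (Finset.subset_univ s₂)
      intro j _ _
      exact Complex.normSq_nonneg _
    linarith
  -- trace
  have hcard₁ : s₁.card = ℓ₁ := card_filter_lt ℓ₁ hℓ₁d
  have hcard₂ : s₂.card = ℓ₂ := card_filter_lt ℓ₂ hℓ₂d
  have htr2 : Matrix.trace M = ∑ i, (f i : ℂ) := by
    have hsp := hS.spectral_theorem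
    rw [hM, hf]
    calc Matrix.trace (proj v ℓ₁ + proj w ℓ₂)
        = Matrix.trace ((hS.eigenvectorUnitary : Matrix (Fin d) (Fin d) ℂ)
            * Matrix.diagonal (RCLike.ofReal ∘ hS.eigenvalues)
            * (star (hS.eigenvectorUnitary : Matrix (Fin d) (Fin d) ℂ))) := congrArg Matrix.trace hsp
      _ = Matrix.trace ((star (hS.eigenvectorUnitary : Matrix (Fin d) (Fin d) ℂ))
            * (hS.eigenvectorUnitary : Matrix (Fin d) (Fin d) ℂ)
            * Matrix.diagonal (RCLike.ofReal ∘ hS.eigenvalues)) := by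
          rw [Matrix.trace_mul_cycle]
      _ = Matrix.trace (Matrix.diagonal (RCLike.ofReal ∘ hS.eigenvalues)) := by
          rw [Unitary.coe_star_mul_self, Matrix.one_mul]
      _ = ∑ i, (hS.eigenvalues i : ℂ) := by rw [Matrix.trace_diagonal]; rfl
  have htr1 : Matrix.trace M = ((ℓ₁ : ℕ) : ℂ) + ((ℓ₂ : ℕ) : ℂ) := by
    rw [hMpsum, Matrix.trace_add, trace_psum v hv s₁, trace_psum w hw s₂, hcard₁, hcard₂]
  have hsum : ∑ i, f i = ((ℓ₁ + ℓ₂ : ℕ) : ℝ) := by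
    have : ∑ i, (f i : ℂ) = ((ℓ₁ : ℕ) : ℂ) + ((ℓ₂ : ℕ) : ℂ) := by rw [← htr2, htr1]
    have h' : ((∑ i, f i : ℝ) : ℂ) = (((ℓ₁ + ℓ₂ : ℕ) : ℝ) : ℂ) := by
      push_cast at this ⊢
      exact this
    exact_mod_cast h'
  -- counting eigenvalues equal to 2
  have uli : LinearIndependent ℂ u := li_of_orthonormal_raw u horth
  have hcard₁' : s₁'.card = d - ℓ₁ := by
    have := Finset.card_filter_add_card_filter_not
      (s := (Finset.univ : Finset (Fin d))) (p := fun i : Fin d => (i : ℕ) < ℓ₁)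
    rw [Finset.card_univ, Fintype.card_fin] at this
    rw [hs₁']
    rw [hs₁] at hcard₁
    omega
  have hcard₂' : s₂'.card = d - ℓ₂ := by
    have := Finset.card_filter_add_card_filter_not
      (s := (Finset.univ : Finset (Fin d))) (p := fun i : Fin d => (i : ℕ) < ℓ₂)
    rw [Finset.card_univ, Fintype.card_fin] at this
    rw [hs₂']
    rw [hs₂] at hcard₂
    omega
  have htd : ℓ₁ + ℓ₂ ≤ d + (Finset.univ.filter fun i => f i = 2).card := by
    set W : Submodule ℂ (Fin d → ℂ) :=
      Submodule.span ℂ ((v '' (s₁' : Set (Fin d))) ∪ (w '' (s₂' : Set (Fin d)))) with hW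
    have hMdecomp : M - (2:ℂ) • (1 : Matrix (Fin d) (Fin d) ℂ)
        = -(psum v s₁' + psum w s₂') := by
      have h21 : (2:ℂ) • (1 : Matrix (Fin d) (Fin d) ℂ)
          = (psum v s₁ + psum v s₁') + (psum w s₂ + psum w s₂') := by
        rw [hv1, hw1, two_smul]
      rw [hMpsum, h21]
      abel
    have hmem : ∀ i, f i - 2 ≠ 0 → u i ∈ W := by
      intro i hfi
      have hMdv : (M - (2:ℂ) • 1) *ᵥ u i = ((f i - 2 : ℝ) : ℂ) • u i := by
        rw [Matrix.sub_mulVec, heig i, Matrix.smul_mulVec, Matrix.one_mulVec]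
        ext j
        push_cast
        simp only [Pi.sub_apply, Pi.smul_apply, smul_eq_mul]
        ring
      have hmem2 : (M - (2:ℂ) • 1) *ᵥ u i ∈ W := by
        rw [hMdecomp, Matrix.neg_mulVec, Matrix.add_mulVec]
        apply Submodule.neg_mem
        apply Submodule.add_mem
        · exact Submodule.span_mono Set.subset_union_left (psum_mulVec_mem_span v s₁' (u i))
        · exact Submodule.span_mono Set.subset_union_right (psum_mulVec_mem_span w s₂' (u i))
      have hc : ((f i - 2 : ℝ) : ℂ) ≠ 0 := by
        rw [Complex.ofReal_ne_zero]
        exact hfi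
      have : u i = ((f i - 2 : ℝ) : ℂ)⁻¹ • ((M - (2:ℂ) • 1) *ᵥ u i) := by
        rw [hMdv, smul_smul, inv_mul_cancel₀ hc, one_smul]
      rw [this]
      exact Submodule.smul_mem _ _ hmem2
    have hcount := card_ne_le_finrank u uli (fun i => f i - 2) W hmem
    have hfrW : Module.finrank ℂ W ≤ (d - ℓ₁) + (d - ℓ₂) := by
      rw [hW, Submodule.span_union]
      have hXA : Module.finrank ℂ (Submodule.span ℂ (v '' (s₁' : Set (Fin d)))) ≤ d - ℓ₁ := by
        rw [show (v '' (s₁' : Set (Fin d))) = ((s₁'.image v : Finset (Fin d → ℂ)) : Set (Fin d → ℂ))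
          from (Finset.coe_image).symm]
        exact le_trans (finrank_span_finset_le_card _)
          (le_trans (Finset.card_image_le) (le_of_eq hcard₁'))
      have hXB : Module.finrank ℂ (Submodule.span ℂ (w '' (s₂' : Set (Fin d)))) ≤ d - ℓ₂ := by
        rw [show (w '' (s₂' : Set (Fin d))) = ((s₂'.image w : Finset (Fin d → ℂ)) : Set (Fin d → ℂ))
          from (Finset.coe_image).symm]
        exact le_trans (finrank_span_finset_le_card _)
          (le_trans (Finset.card_image_le) (le_of_eq hcard₂'))
      have := Submodule.finrank_sup_add_finrank_inf_eq
        (Submodule.span ℂ (v '' (s₁' : Set (Fin d)))) (Submodule.span ℂ (w '' (s₂' : Set (Fin d))))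
      omega
    have hfeq : (Finset.univ.filter fun i => f i - 2 ≠ 0)
        = (Finset.univ.filter fun i => ¬ (f i = 2)) := by
      apply Finset.filter_congr
      intro i _
      simp [sub_ne_zero]
    have hsplit := Finset.card_filter_add_card_filter_not
      (s := (Finset.univ : Finset (Fin d))) (p := fun i : Fin d => f i = 2)
    rw [Finset.card_univ, Fintype.card_fin] at hsplit
    rw [hfeq] at hcount
    omega
  -- pairing
  have hpair : ∑ i, f i = ((Finset.univ.filter fun i => f i ≠ 0).card : ℝ)
      + ((Finset.univ.filter fun i => f i = 2).card : ℝ) := by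
    have hP2 : psum v s₁ * psum v s₁ = psum v s₁ := psum_idem v hv s₁
    have hQ2 : psum w s₂ * psum w s₂ = psum w s₂ := psum_idem w hw s₂
    obtain ⟨hanti0, hDD0⟩ := proj_alg (psum v s₁) (psum w s₂) hP2 hQ2
    set D : Matrix (Fin d) (Fin d) ℂ := psum v s₁ - psum w s₂ with hD
    have hanti : M * D + D * M = D + D := by rw [hMpsum, hD]; exact hanti0
    have hDD : D * D = (M + M) - M * M := by rw [hMpsum, hD]; exact hDD0
    have hDherm : Dᴴ = D := by
      rw [hD, Matrix.conjTranspose_sub, psum_herm, psum_herm]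
    set Dij : Fin d → Fin d → ℂ := fun i j => star (u i) ⬝ᵥ (D *ᵥ u j) with hDij
    have h1 : ∀ i j, f i + f j ≠ 2 → Dij i j = 0 := by
      intro i j hne
      have hqa := congrArg (fun X : Matrix (Fin d) (Fin d) ℂ => star (u i) ⬝ᵥ (X *ᵥ u j)) hanti
      rw [Matrix.add_mulVec, dotProduct_add] at hqa
      rw [← Matrix.mulVec_mulVec (M := M) (N := D), hMleft i] at hqa
      rw [← Matrix.mulVec_mulVec (M := D) (N := M), heig j, Matrix.mulVec_smul,
        dotProduct_smul] at hqa
      rw [show star (u i) ⬝ᵥ ((D + D) *ᵥ u j)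
          = star (u i) ⬝ᵥ (D *ᵥ u j) + star (u i) ⬝ᵥ (D *ᵥ u j) from by
        rw [Matrix.add_mulVec, dotProduct_add]] at hqa
      have hfac : ((f i : ℂ) + (f j : ℂ) - 2) * Dij i j = 0 := by
        rw [hDij]
        simp only [smul_eq_mul] at hqa
        ring_nf
        ring_nf at hqa
        linear_combination hqa
      rcases mul_eq_zero.mp hfac with h | h
      · exfalso
        apply hne
        have : ((f i + f j : ℝ) : ℂ) = 2 := by push_cast; linear_combination h
        exact_mod_cast this
      · exact h
    have hcol : ∀ j, ∑ i, Complex.normSq (Dij i j) = f j * (2 - f j) := by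
      intro j
      have hpars : star (D *ᵥ u j) ⬝ᵥ (D *ᵥ u j)
          = ((∑ i, Complex.normSq (Dij i j) : ℝ) : ℂ) := by
        have hq := quad_psum u Finset.univ (D *ᵥ u j)
        have hpu : psum u Finset.univ = (1 : Matrix (Fin d) (Fin d) ℂ) := hu1
        rw [hpu, Matrix.one_mulVec] at hq
        exact hq
      have hDy : star (D *ᵥ u j) ⬝ᵥ (D *ᵥ u j) = star (u j) ⬝ᵥ ((D * D) *ᵥ u j) := by
        rw [Matrix.star_mulVec, hDherm, ← Matrix.dotProduct_mulVec, Matrix.mulVec_mulVec]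
      have hval : star (u j) ⬝ᵥ ((D * D) *ᵥ u j)
          = ((f j : ℂ) + (f j : ℂ)) - (f j : ℂ) * (f j : ℂ) := by
        have e1 : star (u j) ⬝ᵥ (M *ᵥ u j) = (f j : ℂ) := by
          rw [hMleft j, hunit j, mul_one]
        have e2 : star (u j) ⬝ᵥ (M *ᵥ (M *ᵥ u j)) = (f j : ℂ) * (f j : ℂ) := by
          rw [hMleft j, e1]
        rw [hDD, Matrix.sub_mulVec, Matrix.add_mulVec, dotProduct_sub,
          dotProduct_add, e1, ← Matrix.mulVec_mulVec (M := M) (N := M), e2]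
      have : ((∑ i, Complex.normSq (Dij i j) : ℝ) : ℂ)
          = ((f j : ℂ) + (f j : ℂ)) - (f j : ℂ) * (f j : ℂ) := by
        rw [← hpars, hDy, hval]
      have hr : (∑ i, Complex.normSq (Dij i j) : ℝ) = f j + f j - f j * f j := by
        exact_mod_cast this
      rw [hr]; ring
    have hsym : ∀ i j, Complex.normSq (Dij i j) = Complex.normSq (Dij j i) := by
      intro i j
      have hstar : Dij i j = star (Dij j i) := by
        have h1' : star (u j) ⬝ᵥ (D *ᵥ u i) = star (star (D *ᵥ u i) ⬝ᵥ u j) :=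
          Matrix.star_dotProduct _ _
        rw [hDij]
        simp only
        rw [h1', star_star, Matrix.star_mulVec, hDherm, ← Matrix.dotProduct_mulVec]
      rw [hstar]
      simp [Complex.star_def, Complex.normSq_conj]
    have hrow : ∀ i, ∑ j, Complex.normSq (Dij i j) = f i * (2 - f i) := by
      intro i
      rw [Finset.sum_congr rfl (fun j _ => hsym i j)]
      exact hcol i
    have hphi : ∀ φ : ℝ → ℝ, ∑ j, φ (f j) * (f j * (2 - f j))
        = ∑ i, φ (2 - f i) * (f i * (2 - f i)) := by
      intro φ
      calc ∑ j, φ (f j) * (f j * (2 - f j))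
          = ∑ j, ∑ i, φ (f j) * Complex.normSq (Dij i j) := by
            apply Finset.sum_congr rfl
            intro j _
            rw [← Finset.mul_sum, hcol j]
        _ = ∑ j, ∑ i, φ (2 - f i) * Complex.normSq (Dij i j) := by
            apply Finset.sum_congr rfl
            intro j _
            apply Finset.sum_congr rfl
            intro i _
            by_cases hz : Dij i j = 0
            · rw [hz]; simp
            · have hfe : f i + f j = 2 := by
                by_contra hne
                exact hz (h1 i j hne)
              have : f j = 2 - f i := by linarith
              rw [this]
        _ = ∑ i, ∑ j, φ (2 - f i) * Complex.normSq (Dij i j) := Finset.sum_comm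
        _ = ∑ i, φ (2 - f i) * (f i * (2 - f i)) := by
            apply Finset.sum_congr rfl
            intro i _
            rw [← Finset.mul_sum, hrow i]
    set φ₀ : ℝ → ℝ := fun x => if x = 0 ∨ x = 2 then 0 else (x - 1)/(x * (2 - x)) with hφ₀
    have hLphi : ∀ j, φ₀ (f j) * (f j * (2 - f j))
        = if f j = 0 ∨ f j = 2 then 0 else f j - 1 := by
      intro j
      rw [hφ₀]
      by_cases hc : f j = 0 ∨ f j = 2
      · simp only [if_pos hc]
        rcases hc with h | h <;> rw [h] <;> ring
      · simp only [if_neg hc]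
        push_neg at hc
        have hne : f j * (2 - f j) ≠ 0 := by
          apply mul_ne_zero hc.1
          intro h
          exact hc.2 (by linarith)
        field_simp
        rw [mul_right_comm, mul_div_right_comm, div_self hne, one_mul]
    have hRphi : ∀ i, φ₀ (2 - f i) * (f i * (2 - f i))
        = if f i = 0 ∨ f i = 2 then 0 else 1 - f i := by
      intro i
      rw [hφ₀]
      by_cases hc : f i = 0 ∨ f i = 2
      · have h20 : φ₀ (2 - f i) * (f i * (2 - f i)) = 0 := by
          rcases hc with h | h
          · rw [h, hφ₀]
            norm_num
          · rw [h, hφ₀]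
            norm_num
        rw [h20, if_pos hc]
      · have hcond : ¬ (2 - f i = 0 ∨ 2 - f i = 2) := by
          push_neg at hc ⊢
          constructor
          · intro h; exact hc.2 (by linarith)
          · intro h; exact hc.1 (by linarith)
        simp only [if_neg hcond, if_neg hc]
        push_neg at hc
        have h2' : (2 : ℝ) - (2 - f i) = f i := by ring
        rw [h2']
        have hne1 : (2 : ℝ) - f i ≠ 0 := fun h => hc.2 (by linarith)
        have hb : (2 - f i) * f i ≠ 0 := mul_ne_zero hne1 hc.1
        rw [show f i * (2 - f i) = (2 - f i) * f i from mul_comm _ _]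
        rw [div_mul_cancel₀ _ hb]
        ring
    have hkey := hphi φ₀
    rw [Finset.sum_congr rfl (fun j (_ : j ∈ Finset.univ) => hLphi j),
      Finset.sum_congr rfl (fun i (_ : i ∈ Finset.univ) => hRphi i)] at hkey
    have hcancel : ∑ j, ((if f j = 0 ∨ f j = 2 then (0:ℝ) else f j - 1)
        + (if f j = 0 ∨ f j = 2 then (0:ℝ) else 1 - f j)) = 0 := by
      apply Finset.sum_eq_zero
      intro j _
      by_cases hc : f j = 0 ∨ f j = 2 <;> simp [hc] <;> ring
    rw [Finset.sum_add_distrib] at hcancel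
    have hzero : ∑ j, (if f j = 0 ∨ f j = 2 then (0:ℝ) else f j - 1) = 0 := by linarith
    -- decomposition of the sum
    have hdecomp : ∀ j : Fin d, f j = (if f j = 0 ∨ f j = 2 then (0:ℝ) else f j - 1)
        + (if f j = 2 then (2:ℝ) else 0) + (if f j = 0 ∨ f j = 2 then (0:ℝ) else 1) := by
      intro j
      by_cases h2c : f j = 2
      · simp [h2c]
      · by_cases h0c : f j = 0
        · simp [h0c, h2c]
        · simp only [h0c, h2c, or_self, if_neg, if_false]
          ring
    have hsum_split : ∑ i, f i = (∑ j, (if f j = 2 then (2:ℝ) else 0))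
        + (∑ j, (if f j = 0 ∨ f j = 2 then (0:ℝ) else 1)) := by
      have hstep : ∑ i, f i = (∑ j, (if f j = 0 ∨ f j = 2 then (0:ℝ) else f j - 1))
          + (∑ j, (if f j = 2 then (2:ℝ) else 0))
          + (∑ j, (if f j = 0 ∨ f j = 2 then (0:ℝ) else 1)) := by
        rw [← Finset.sum_add_distrib, ← Finset.sum_add_distrib]
        exact Finset.sum_congr rfl (fun j _ => hdecomp j)
      rw [hstep, hzero, zero_add]
    have hsum2a : ∑ j, (if f j = 2 then (2:ℝ) else 0)
        = 2 * ((Finset.univ.filter fun i => f i = 2).card : ℝ) := by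
      rw [← Finset.sum_filter]
      rw [Finset.sum_const]
      push_cast
      ring
    have hsum1n : ∑ j, (if f j = 0 ∨ f j = 2 then (0:ℝ) else 1)
        = ((Finset.univ.filter fun i => ¬ (f i = 0 ∨ f i = 2)).card : ℝ) := by
      have : ∀ j : Fin d, (if f j = 0 ∨ f j = 2 then (0:ℝ) else 1)
          = (if ¬ (f j = 0 ∨ f j = 2) then (1:ℝ) else 0) := by
        intro j
        by_cases hc : f j = 0 ∨ f j = 2 <;> simp [hc]
      rw [Finset.sum_congr rfl (fun j _ => this j), ← Finset.sum_filter, Finset.sum_const]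
      push_cast
      ring
    have hrcard : (Finset.univ.filter fun i => f i ≠ 0).card
        = (Finset.univ.filter fun i => f i = 2).card
          + (Finset.univ.filter fun i => ¬ (f i = 0 ∨ f i = 2)).card := by
      have hun : (Finset.univ.filter fun i => f i ≠ 0)
          = (Finset.univ.filter fun i => f i = 2)
            ∪ (Finset.univ.filter fun i => ¬ (f i = 0 ∨ f i = 2)) := by
        ext i
        simp only [Finset.mem_filter, Finset.mem_union, Finset.mem_univ, true_and]
        constructor
        · intro h
          by_cases h2c : f i = 2
          · exact Or.inl h2c
          · exact Or.inr (by push_neg; exact ⟨h, h2c⟩)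
        · intro h
          rcases h with h | h
          · rw [h]; norm_num
          · push_neg at h
            exact h.1
      have hdisj : Disjoint (Finset.univ.filter fun i => f i = 2)
          (Finset.univ.filter fun i => ¬ (f i = 0 ∨ f i = 2)) := by
        refine Finset.disjoint_left.mpr fun x hx hx' => ?_
        have h1' := (Finset.mem_filter.mp hx).2
        have h2' := (Finset.mem_filter.mp hx').2
        exact h2' (Or.inr h1')
      rw [hun, Finset.card_union_of_disjoint hdisj]
    rw [hsum_split, hsum2a, hsum1n, hrcard]
    push_cast
    ring
  have main := endgame f k (ℓ₁ + ℓ₂) hk1 hkd h0 hsum htd hpair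
  constructor
  · have hb1 : min (k:ℝ) ((ℓ₁:ℝ) + ℓ₂ - d) ≤ ((min k (ℓ₁ + ℓ₂ - d) : ℕ) : ℝ) := by
      rcases le_total d (ℓ₁ + ℓ₂) with hle | hle
      · rw [Nat.cast_min, Nat.cast_sub hle]
        push_cast
        exact min_le_min le_rfl le_rfl
      · have h1 : (ℓ₁:ℝ) + ℓ₂ - d ≤ 0 := by
          have : ((ℓ₁ + ℓ₂ : ℕ) : ℝ) ≤ d := by exact_mod_cast hle
          push_cast at this
          linarith
        calc min (k:ℝ) ((ℓ₁:ℝ) + ℓ₂ - d) ≤ (ℓ₁:ℝ) + ℓ₂ - d := min_le_right _ _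
          _ ≤ 0 := h1
          _ ≤ _ := Nat.cast_nonneg _
    have hb2 : min (k:ℝ) ((ℓ₁:ℝ) + ℓ₂) = ((min k (ℓ₁ + ℓ₂) : ℕ) : ℝ) := by
      rw [Nat.cast_min]
      push_cast
      ring_nf
    calc min (k:ℝ) ((ℓ₁:ℝ) + ℓ₂ - d) + min (k:ℝ) ((ℓ₁:ℝ) + ℓ₂)
        ≤ ((min k (ℓ₁ + ℓ₂ - d) : ℕ) : ℝ) + ((min k (ℓ₁ + ℓ₂) : ℕ) : ℝ) := by
          rw [← hb2]; exact add_le_add hb1 le_rfl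
      _ ≤ sk f k := main.1
  · intro htk
    have := main.2 htk
    rw [this]
    push_cast
    ring
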